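/- arXiv:1703.04320 — 2 statements merged into one kernel-verified Lean document; each statement's English description precedes it below -/
import Mathlib

section
/- (Bias expansion) Let (ξ_k)_{k∈ℤ} be real numbers, let d be a positive integer with Σ_{k∈ℤ}|k|^d|ξ_k| < ∞, let w : ℝ → ℝ be bounded, supported on [−1,1], with w(0) = 1, and such that C_w(d) := lim_{u→0}(1−w(u))/|u|^d exists, is finite and nonzero, and let (r_n) be a sequence of positive reals with r_n → ∞. Define f^{[d]}(ω) := (1/2π)Σ_{k∈ℤ}|k|^d ξ_k e^{−ikω}. Then for every ω ∈ ℝ: r_n^{d}·[ (1/2π)Σ_{|k| ≤ r_n}(w(k/r_n) − 1)ξ_k e^{−ikω} − (1/2π)Σ_{|k| > r_n} ξ_k e^{−ikω} ] → −C_w(d)·f^{[d]}(ω) as n → ∞; equivalently, this bias term equals −C_w(d)·r_n^{−d}·f^{[d]}(ω) + o(r_n^{−d}). -/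
open MeasureTheory ProbabilityTheory Filter
open scoped Classical Topology BigOperators

noncomputable section

namespace SerialDep

variable {Ω : Type*} [MeasurableSpace Ω]

/-- Strict stationarity of a real-valued process indexed by `ℤ`. -/
def StrictlyStationary (P : Measure Ω) (X : ℤ → Ω → ℝ) : Prop :=
  ∀ (n : ℕ) (t : Fin n → ℤ) (s : ℤ),
    Measure.map (fun ω (i : Fin n) => X (t i + s) ω) P
      = Measure.map (fun ω (i : Fin n) => X (t i) ω) P

/-- σ-algebra generated by the variables `X s`, `s ∈ S`. -/
def sigmaOf (X : ℤ → Ω → ℝ) (S : Set ℤ) : MeasurableSpace Ω :=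
  ⨆ s ∈ S, MeasurableSpace.comap (X s) inferInstance

/-- β-dependence coefficient between two sub-σ-algebras. -/
def betaDep (P : Measure Ω) (A B : MeasurableSpace Ω) : ℝ :=
  sSup {x : ℝ | ∃ (I J : ℕ) (As : Fin I → Set Ω) (Bs : Fin J → Set Ω),
    (∀ i, MeasurableSet[A] (As i)) ∧ (∀ j, MeasurableSet[B] (Bs j)) ∧
    Pairwise (Function.onFun Disjoint As) ∧ (⋃ i, As i) = Set.univ ∧
    Pairwise (Function.onFun Disjoint Bs) ∧ (⋃ j, Bs j) = Set.univ ∧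
    x = (1/2) * ∑ i : Fin I, ∑ j : Fin J,
      |(P (As i ∩ Bs j)).toReal - (P (As i)).toReal * (P (Bs j)).toReal| }

/-- β-mixing coefficients of the process `X`. -/
def betaMix (P : Measure Ω) (X : ℤ → Ω → ℝ) (n : ℕ) : ℝ :=
  betaDep P (sigmaOf X {s | s ≤ 0}) (sigmaOf X {s | (n : ℤ) ≤ s})

/-- α-mixing coefficients of the process `X`. -/
def alphaMix (P : Measure Ω) (X : ℤ → Ω → ℝ) (n : ℕ) : ℝ :=
  sSup {x : ℝ | ∃ A B : Set Ω,
    MeasurableSet[sigmaOf X {s | s ≤ 0}] A ∧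
    MeasurableSet[sigmaOf X {s | (n : ℤ) ≤ s}] B ∧
    x = |(P (A ∩ B)).toReal - (P A).toReal * (P B).toReal| }

/-- The law `F_k` of the pair `(X 0, X k)`. -/
def lawPair (P : Measure Ω) (X : ℤ → Ω → ℝ) (k : ℤ) : Measure (ℝ × ℝ) :=
  Measure.map (fun ω => (X 0 ω, X k ω)) P

/-- `ξ k`: the expectation of the kernel `h` under `m` independent copies of `(X 0, X k)`. -/
def xi (P : Measure Ω) (X : ℤ → Ω → ℝ) (m : ℕ) (h : (Fin m → ℝ × ℝ) → ℝ) (k : ℤ) : ℝ :=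
  ∫ y, h y ∂(Measure.pi fun _ : Fin m => lawPair P X k)

/-- Spectral density associated with a summable sequence of dependence measures. -/
def specDens (ξ : ℤ → ℝ) (ω : ℝ) : ℂ :=
  (((2 * Real.pi)⁻¹ : ℝ) : ℂ) *
    ∑' k : ℤ, ((ξ k : ℝ) : ℂ) * Complex.exp (-(k : ℂ) * Complex.I * (ω : ℂ))

/-- Generalized `d`-th derivative of the spectral density. -/
def specDensD (ξ : ℤ → ℝ) (d : ℕ) (ω : ℝ) : ℂ :=
  (((2 * Real.pi)⁻¹ : ℝ) : ℂ) *
    ∑' k : ℤ, ((|(k : ℝ)| ^ d * ξ k : ℝ) : ℂ) * Complex.exp (-(k : ℂ) * Complex.I * (ω : ℂ))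

/-- The index set `T_k = {t : t, t+k ∈ {1,…,n}}`. -/
def Tk (n : ℕ) (k : ℤ) : Finset ℤ :=
  (Finset.Icc (1 : ℤ) (n : ℤ)).filter fun t => 1 ≤ t + k ∧ t + k ≤ (n : ℤ)

/-- The `U`-statistic of order `m` with kernel `h` based on the lag-`k` pairs. -/
def UStat (n : ℕ) (k : ℤ) (m : ℕ) (h : (Fin m → ℝ × ℝ) → ℝ)
    (X : ℤ → Ω → ℝ) (x : Ω) : ℝ :=
  (((n - k.natAbs).choose m : ℝ))⁻¹ *
    ∑ t ∈ (Fintype.piFinset fun _ : Fin m => Tk n k).filter (fun t => StrictMono t),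
      h fun i => (X (t i) x, X (t i + k) x)

/-- The `U`-lag-window estimate of the spectral density. -/
def lagEst (n : ℕ) (r : ℝ) (w : ℝ → ℝ) (m : ℕ) (h : (Fin m → ℝ × ℝ) → ℝ)
    (X : ℤ → Ω → ℝ) (ω : ℝ) (x : Ω) : ℂ :=
  (((2 * Real.pi)⁻¹ : ℝ) : ℂ) * ∑ k ∈ Finset.Ioo (-(n : ℤ)) (n : ℤ),
    ((w ((k : ℝ) / r) * UStat n k m h X x : ℝ) : ℂ) *
      Complex.exp (-(k : ℂ) * Complex.I * (ω : ℂ))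

/-- The combined time points `(t₁, t₁+k, …, t_m, t_m+k)`. -/
def combinedTimes (m : ℕ) (t : Fin m → ℤ) (k : ℤ) : Fin (2 * m) → ℤ := fun i =>
  if (i : ℕ) % 2 = 0 then t ⟨(i : ℕ) / 2, by have := i.isLt; omega⟩
  else t ⟨(i : ℕ) / 2, by have := i.isLt; omega⟩ + k

/-- The sorted combined time points `t₍₁₎ ≤ ⋯ ≤ t₍₂ₘ₎`. -/
def sortedTimes (m : ℕ) (t : Fin m → ℤ) (k : ℤ) : Fin (2 * m) → ℤ :=
  combinedTimes m t k ∘ Tuple.sort (combinedTimes m t k)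

/-- Sorted combined time points, extended by junk to all of `ℕ`. -/
def sortedTimesNat (m : ℕ) (t : Fin m → ℤ) (k : ℤ) : ℕ → ℤ := fun i =>
  if hi : i < 2 * m then sortedTimes m t k ⟨i, hi⟩ else 0

/-- The kernel `h`, viewed as a function of the `2m` sorted coordinates, evaluated at the `m`
pairs formed from these coordinates. -/
def repairedKernel (m : ℕ) (h : (Fin m → ℝ × ℝ) → ℝ) (t : Fin m → ℤ) (k : ℤ) :
    (Fin (2 * m) → ℝ) → ℝ := fun x =>
  h fun i =>
    (x ((Tuple.sort (combinedTimes m t k)).symm ⟨2 * (i : ℕ), by have := i.isLt; omega⟩),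
     x ((Tuple.sort (combinedTimes m t k)).symm ⟨2 * (i : ℕ) + 1, by have := i.isLt; omega⟩))

/-- The joint law `G` of `(X_{t₍₁₎}, …, X_{t₍₂ₘ₎})`. -/
def jointLaw (P : Measure Ω) (X : ℤ → Ω → ℝ) (m : ℕ) (t : Fin m → ℤ) (k : ℤ) :
    Measure (Fin (2 * m) → ℝ) :=
  Measure.map (fun ω (i : Fin (2 * m)) => X (sortedTimes m t k i) ω) P

/-- The law `G_j^(1)` of `(X_{t₍₁₎}, …, X_{t₍ⱼ₎})`. -/
def splitLaw1 (P : Measure Ω) (X : ℤ → Ω → ℝ) (m : ℕ) (t : Fin m → ℤ) (k : ℤ) (j : ℕ) :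
    Measure (Fin j → ℝ) :=
  Measure.map (fun ω (i : Fin j) => X (sortedTimesNat m t k (i : ℕ)) ω) P

/-- The law `G_j^(2)` of `(X_{t₍ⱼ₊₁₎}, …, X_{t₍₂ₘ₎})`. -/
def splitLaw2 (P : Measure Ω) (X : ℤ → Ω → ℝ) (m : ℕ) (t : Fin m → ℤ) (k : ℤ) (j : ℕ) :
    Measure (Fin (2 * m - j) → ℝ) :=
  Measure.map (fun ω (i : Fin (2 * m - j)) => X (sortedTimesNat m t k (j + (i : ℕ))) ω) P

/-- Glueing a `j`-tuple and an `(N-j)`-tuple into an `N`-tuple. -/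
def glue (j N : ℕ) (p : (Fin j → ℝ) × (Fin (N - j) → ℝ)) : Fin N → ℝ := fun i =>
  if hij : (i : ℕ) < j then p.1 ⟨(i : ℕ), hij⟩
  else p.2 ⟨(i : ℕ) - j, by have := i.isLt; omega⟩

/-- The uniform `(2+δ)`-moment condition (C2) for a (possibly lag-dependent) kernel of order
`c`: the `(2+δ)`-th moment of the kernel is bounded by `M₀` under the joint law of the sorted
configuration and under all split-product laws. -/
def MomentConditionK (P : Measure Ω) (X : ℤ → Ω → ℝ) (c : ℕ)
    (H : ℤ → (Fin c → ℝ × ℝ) → ℝ) (δ M₀ : ℝ) : Prop :=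
  ∀ (t : Fin c → ℤ) (k : ℤ),
    (∫ x, |repairedKernel c (H k) t k x| ^ (2 + δ) ∂(jointLaw P X c t k)) ≤ M₀ ∧
    ∀ j : ℕ, 1 ≤ j → j ≤ 2 * c →
      (∫ p, |repairedKernel c (H k) t k (glue j (2 * c) p)| ^ (2 + δ)
        ∂((splitLaw1 P X c t k j).prod (splitLaw2 P X c t k j))) ≤ M₀

/-- The uniform `(2+δ)`-moment condition (C2) for a fixed kernel `h` of order `m`. -/
def MomentCondition (P : Measure Ω) (X : ℤ → Ω → ℝ) (m : ℕ)
    (h : (Fin m → ℝ × ℝ) → ℝ) (δ M₀ : ℝ) : Prop :=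
  MomentConditionK P X m (fun _ => h) δ M₀

/-- The Hoeffding projection kernel `h_{c,k}`. -/
def hoeffKernel (P : Measure Ω) (X : ℤ → Ω → ℝ) (m : ℕ) (h : (Fin m → ℝ × ℝ) → ℝ)
    (c : ℕ) (k : ℤ) (y : Fin c → ℝ × ℝ) : ℝ :=
  ∑ S : Finset (Fin c), (-1 : ℝ) ^ (c - S.card) *
    ∫ z : Fin m → ℝ × ℝ,
      h (fun i => if hi : (i : ℕ) < c then
            (if (⟨(i : ℕ), hi⟩ : Fin c) ∈ S then y ⟨(i : ℕ), hi⟩ else z i)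
          else z i)
      ∂(Measure.pi fun _ : Fin m => lawPair P X k)

/-- The first order Hoeffding projection kernel `h_{1,k}`. -/
def h1 (P : Measure Ω) (X : ℤ → Ω → ℝ) (m : ℕ) (h : (Fin m → ℝ × ℝ) → ℝ)
    (k : ℤ) (p : ℝ × ℝ) : ℝ :=
  hoeffKernel P X m h 1 k fun _ => p

/-- A finite family of finsets is a set partition of `Fin p`. -/
def IsPartitionOf (p : ℕ) (π : Finset (Finset (Fin p))) : Prop :=
  (∅ ∉ π) ∧ (π : Set (Finset (Fin p))).PairwiseDisjoint id ∧ π.sup id = Finset.univ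

/-- The joint cumulant of `p` real random variables. -/
def jointCumulant (P : Measure Ω) (p : ℕ) (Z : Fin p → Ω → ℝ) : ℝ :=
  ∑ π ∈ Finset.univ.filter (IsPartitionOf p),
    (-1 : ℝ) ^ (π.card - 1) * ((π.card - 1).factorial : ℝ) *
      ∏ B ∈ π, ∫ x, ∏ i ∈ B, Z i x ∂P

/-- Real-valued indicator of a proposition. -/
def indic (p : Prop) : ℝ := if p then 1 else 0

/-- Kendall's τ at lag `k`. -/
def kendallTau (P : Measure Ω) (X : ℤ → Ω → ℝ) (k : ℤ) : ℝ :=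
  2 * (((lawPair P X k).prod (lawPair P X k))
        {z : (ℝ × ℝ) × (ℝ × ℝ) | z.1.1 < z.2.1 ∧ z.1.2 < z.2.2}).toReal +
  2 * (((lawPair P X k).prod (lawPair P X k))
        {z : (ℝ × ℝ) × (ℝ × ℝ) | z.2.1 < z.1.1 ∧ z.2.2 < z.1.2}).toReal - 1

/-- Spearman's ρ at lag `k`. -/
def spearmanRho (P : Measure Ω) (X : ℤ → Ω → ℝ) (k : ℤ) : ℝ :=
  3 * (((Measure.pi fun _ : Fin 3 => lawPair P X k)
          {z : Fin 3 → ℝ × ℝ | ((z 0).1 - (z 1).1) * ((z 0).2 - (z 2).2) > 0}).toReal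
      - ((Measure.pi fun _ : Fin 3 => lawPair P X k)
          {z : Fin 3 → ℝ × ℝ | ((z 0).1 - (z 1).1) * ((z 0).2 - (z 2).2) < 0}).toReal)

/-- The Kendall kernel `h^τ`. -/
def htau (y : Fin 2 → ℝ × ℝ) : ℝ :=
  2 * indic ((y 0).1 < (y 1).1 ∧ (y 0).2 < (y 1).2)
  + 2 * indic ((y 1).1 < (y 0).1 ∧ (y 1).2 < (y 0).2) - 1

/-- The Spearman kernel `h^ρ`. -/
def hrho (y : Fin 3 → ℝ × ℝ) : ℝ :=
  (1 / 6) * ∑ γ : Equiv.Perm (Fin 3),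
    (12 * indic ((y (γ 0)).1 < (y (γ 1)).1 ∧ (y (γ 0)).2 < (y (γ 2)).2) - 3)

/-- First order Hoeffding kernel of the Kendall kernel. -/
def htau1 (P : Measure Ω) (X : ℤ → Ω → ℝ) (k : ℤ) (x y : ℝ) : ℝ :=
  (∫ p : ℝ × ℝ, 4 * (indic (x < p.1) - 1/2) * (indic (y < p.2) - 1/2) ∂(lawPair P X k))
    - kendallTau P X k

/-- First order Hoeffding kernel of the Spearman kernel. -/
def hrho1 (P : Measure Ω) (X : ℤ → Ω → ℝ) (k : ℤ) (q : ℝ × ℝ) : ℝ :=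
  (∫ z : (ℝ × ℝ) × (ℝ × ℝ), hrho ![q, z.1, z.2] ∂((lawPair P X k).prod (lawPair P X k)))
    - spearmanRho P X k

/-- Covariance of two real random variables. -/
def cov (P : Measure Ω) (A B : Ω → ℝ) : ℝ :=
  (∫ x, A x * B x ∂P) - (∫ x, A x ∂P) * (∫ x, B x ∂P)

/-- Fourth joint cumulant of four mean-zero real random variables. -/
def cum4 (P : Measure Ω) (A B C D : Ω → ℝ) : ℝ :=
  (∫ x, A x * B x * C x * D x ∂P)
  - (∫ x, A x * B x ∂P) * (∫ x, C x * D x ∂P)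
  - (∫ x, A x * C x ∂P) * (∫ x, B x * D x ∂P)
  - (∫ x, A x * D x ∂P) * (∫ x, B x * C x ∂P)

/-- `Y` is a copy of the process `X`: all finite-dimensional distributions agree. -/
def IsCopyOf (P : Measure Ω) (Y X : ℤ → Ω → ℝ) : Prop :=
  ∀ (n : ℕ) (t : Fin n → ℤ),
    Measure.map (fun ω (i : Fin n) => Y (t i) ω) P
      = Measure.map (fun ω (i : Fin n) => X (t i) ω) P

end SerialDep

namespace SerialDep

variable {Ω : Type*} [MeasurableSpace Ω]

lemma bias_aux_bound (w : ℝ → ℝ) (d : ℕ) (M Cw : ℝ) (hM : ∀ x, |w x| ≤ M)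
    (hCwlim : Filter.Tendsto (fun u : ℝ => (1 - w u) / |u| ^ d)
      (nhdsWithin (0 : ℝ) {0}ᶜ) (nhds Cw)) :
    ∃ C : ℝ, 1 ≤ C ∧ ∀ u : ℝ, u ≠ 0 → |1 - w u| ≤ C * |u| ^ d := by
  have hM0 : 0 ≤ M := le_trans (abs_nonneg _) (hM 0)
  have h1 : ∀ᶠ u in nhdsWithin (0:ℝ) {0}ᶜ, dist ((1 - w u)/|u|^d) Cw < 1 :=
    hCwlim (Metric.ball_mem_nhds _ one_pos)
  rw [eventually_nhdsWithin_iff, Metric.eventually_nhds_iff] at h1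
  obtain ⟨δ, hδ0, hδ⟩ := h1
  set m := min δ 1 with hm
  have hm0 : 0 < m := lt_min hδ0 one_pos
  refine ⟨max 1 (max (|Cw| + 1) ((1 + M) / m ^ d)), le_max_left _ _, ?_⟩
  intro u hu
  have hupos : 0 < |u| ^ d := pow_pos (abs_pos.mpr hu) d
  by_cases hlt : |u| < δ
  · have hdist := hδ (show dist u (0:ℝ) < δ by simpa [Real.dist_eq] using hlt) (by simpa using hu)
    rw [Real.dist_eq] at hdist
    have habs : |(1 - w u)/|u|^d| < |Cw| + 1 := by
      calc |(1 - w u)/|u|^d| = |((1 - w u)/|u|^d - Cw) + Cw| := by ring_nf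
        _ ≤ |(1 - w u)/|u|^d - Cw| + |Cw| := abs_add_le _ _
        _ < 1 + |Cw| := by linarith
        _ = |Cw| + 1 := by ring
    have heq : |1 - w u| = |(1 - w u)/|u|^d| * |u|^d := by
      rw [abs_div, abs_of_pos hupos, div_mul_cancel₀ _ hupos.ne']
    calc |1 - w u| = |(1 - w u)/|u|^d| * |u|^d := heq
      _ ≤ (|Cw| + 1) * |u|^d := by nlinarith
      _ ≤ max 1 (max (|Cw| + 1) ((1 + M) / m ^ d)) * |u|^d := by
          have : (|Cw| + 1) ≤ max 1 (max (|Cw| + 1) ((1 + M) / m ^ d)) :=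
            le_trans (le_max_left _ _) (le_max_right _ _)
          nlinarith
  · have hmu : m ≤ |u| := le_trans (min_le_left _ _) (not_lt.mp hlt)
    have hmd : m ^ d ≤ |u| ^ d := pow_le_pow_left₀ hm0.le hmu d
    have h2 : |1 - w u| ≤ 1 + M := by
      calc |1 - w u| ≤ |(1:ℝ)| + |w u| := abs_sub _ _
        _ ≤ 1 + M := by simp [hM u]
    have hmdpos : 0 < m ^ d := pow_pos hm0 d
    have key : (1 + M) ≤ ((1 + M) / m ^ d) * |u|^d := by
      rw [div_mul_eq_mul_div, le_div_iff₀ hmdpos]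
      nlinarith
    have : ((1 + M) / m ^ d) ≤ max 1 (max (|Cw| + 1) ((1 + M) / m ^ d)) :=
      le_trans (le_max_right _ _) (le_max_right _ _)
    nlinarith

/-- bias expansion -/
theorem bias_expansion
    (ξ : ℤ → ℝ) (d : ℕ) (hd : 0 < d)
    (hsum : Summable fun k : ℤ => |(k : ℝ)| ^ d * |ξ k|)
    (w : ℝ → ℝ) (hw_bdd : ∃ M : ℝ, ∀ x, |w x| ≤ M)
    (hw_supp : ∀ x : ℝ, x ∉ Set.Icc (-1 : ℝ) 1 → w x = 0) (hw0 : w 0 = 1)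
    (Cw : ℝ) (hCw : Cw ≠ 0)
    (hCwlim : Filter.Tendsto (fun u : ℝ => (1 - w u) / |u| ^ d)
      (nhdsWithin (0 : ℝ) {0}ᶜ) (nhds Cw))
    (r : ℕ → ℝ) (hrpos : ∀ n, 0 < r n) (hr : Filter.Tendsto r Filter.atTop Filter.atTop)
    (ω : ℝ) :
    Filter.Tendsto (fun n : ℕ => ((r n : ℝ) : ℂ) ^ d *
        ((((2 * Real.pi)⁻¹ : ℝ) : ℂ) *
          ∑' k : ℤ, (if |(k : ℝ)| ≤ r n
              then (((w ((k : ℝ) / r n) - 1) * ξ k : ℝ) : ℂ)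
              else -((ξ k : ℝ) : ℂ)) *
            Complex.exp (-(k : ℂ) * Complex.I * (ω : ℂ))))
      Filter.atTop
      (nhds (-((Cw : ℝ) : ℂ) * specDensD ξ d ω)) := by
  classical
  obtain ⟨M, hM⟩ := hw_bdd
  obtain ⟨C, hC1, hC⟩ := bias_aux_bound w d M Cw hM hCwlim
  set e : ℤ → ℂ := fun k => Complex.exp (-(k : ℂ) * Complex.I * (ω : ℂ)) with he
  have hexp : ∀ k : ℤ, ‖e k‖ = 1 := by
    intro k
    have h1 : -(k : ℂ) * Complex.I * (ω : ℂ) = ((-(k : ℝ) * ω : ℝ) : ℂ) * Complex.I := by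
      push_cast; ring
    simp only [he]
    rw [h1, Complex.norm_exp_ofReal_mul_I]
  set f : ℕ → ℤ → ℂ := fun n k =>
    ((r n : ℝ) : ℂ) ^ d *
      ((if |(k : ℝ)| ≤ r n then (((w ((k : ℝ) / r n) - 1) * ξ k : ℝ) : ℂ)
        else -((ξ k : ℝ) : ℂ)) * e k) with hf
  set g : ℤ → ℂ := fun k => ((-(Cw * |(k : ℝ)| ^ d * ξ k) : ℝ) : ℂ) * e k with hg
  have key : Tendsto (fun n => ∑' k, f n k) atTop (𝓝 (∑' k, g k)) := by
    apply tendsto_tsum_of_dominated_convergence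
      (bound := fun k : ℤ => C * (|(k : ℝ)| ^ d * |ξ k|)) (hsum.mul_left C)
    · intro k
      by_cases hk : k = 0
      · subst hk
        have h0 : ∀ n, f n 0 = 0 := by
          intro n
          simp [hf, hw0, (hrpos n).le]
        have hg0 : g 0 = 0 := by simp [hg, zero_pow hd.ne']
        simp only [h0, hg0]
        exact tendsto_const_nhds
      · have hk' : ((k : ℝ)) ≠ 0 := Int.cast_ne_zero.mpr hk
        have hKpos : 0 < |(k : ℝ)| := abs_pos.mpr hk'
        have hu : Tendsto (fun n => (k : ℝ) / r n) atTop (nhdsWithin 0 {0}ᶜ) := by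
          rw [tendsto_nhdsWithin_iff]
          refine ⟨Tendsto.div_atTop tendsto_const_nhds hr, Eventually.of_forall fun n => ?_⟩
          simp only [Set.mem_compl_iff, Set.mem_singleton_iff]
          exact div_ne_zero hk' (hrpos n).ne'
        have hcomp := hCwlim.comp hu
        have hs : Tendsto (fun n => (r n) ^ d * ((w ((k : ℝ) / r n) - 1) * ξ k)) atTop
            (𝓝 (-(Cw * |(k : ℝ)| ^ d * ξ k))) := by
          have h2 := hcomp.const_mul (-(|(k : ℝ)| ^ d * ξ k))
          rw [show (-(Cw * |(k : ℝ)| ^ d * ξ k)) = (-(|(k : ℝ)| ^ d * ξ k)) * Cw by ring]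
          refine Tendsto.congr (fun n => ?_) h2
          simp only [Function.comp]
          have h3 : |(k : ℝ) / r n| = |(k : ℝ)| / r n := by
            rw [abs_div, abs_of_pos (hrpos n)]
          rw [h3, div_pow]
          have hrn := (hrpos n).ne'
          field_simp
          ring
        have hsC : Tendsto (fun n => (((r n) ^ d * ((w ((k : ℝ) / r n) - 1) * ξ k) : ℝ) : ℂ))
            atTop (𝓝 ((-(Cw * |(k : ℝ)| ^ d * ξ k) : ℝ) : ℂ)) :=
          (Complex.continuous_ofReal.tendsto _).comp hs
        refine Tendsto.congr' ?_ (hsC.mul_const (e k))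
        filter_upwards [hr.eventually_ge_atTop |(k : ℝ)|] with n hn
        simp only [hf]
        simp only [if_pos hn]
        push_cast
        ring
    · refine Eventually.of_forall fun n k => ?_
      have hnorm : ‖f n k‖ = (r n) ^ d *
          ‖(if |(k : ℝ)| ≤ r n then (((w ((k : ℝ) / r n) - 1) * ξ k : ℝ) : ℂ)
            else -((ξ k : ℝ) : ℂ))‖ := by
        simp only [hf]
        rw [norm_mul, norm_mul, hexp, mul_one, norm_pow, Complex.norm_real,
          Real.norm_eq_abs, abs_of_pos (hrpos n)]
      by_cases hle : |(k : ℝ)| ≤ r n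
      · by_cases hk : k = 0
        · subst hk
          have h0 : f n 0 = 0 := by simp [hf, hw0, (hrpos n).le]
          rw [h0, norm_zero]
          positivity
        · have hk' : ((k : ℝ)) ≠ 0 := Int.cast_ne_zero.mpr hk
          have hu0 : ((k : ℝ) / r n) ≠ 0 := div_ne_zero hk' (hrpos n).ne'
          have hb := hC _ hu0
          rw [hnorm, if_pos hle, Complex.norm_real, Real.norm_eq_abs, abs_mul]
          have h3 : |(k : ℝ) / r n| ^ d = |(k : ℝ)| ^ d / (r n) ^ d := by
            rw [abs_div, abs_of_pos (hrpos n), div_pow]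
          rw [h3] at hb
          have h4 : |w ((k : ℝ) / r n) - 1| = |1 - w ((k : ℝ) / r n)| := abs_sub_comm _ _
          have hrd : (0:ℝ) < (r n) ^ d := pow_pos (hrpos n) d
          calc (r n) ^ d * (|w ((k : ℝ) / r n) - 1| * |ξ k|)
              ≤ (r n) ^ d * ((C * (|(k : ℝ)| ^ d / (r n) ^ d)) * |ξ k|) := by
                refine mul_le_mul_of_nonneg_left ?_ hrd.le
                refine mul_le_mul_of_nonneg_right ?_ (abs_nonneg _)
                rw [h4]; exact hb
            _ = C * (|(k : ℝ)| ^ d * |ξ k|) := by field_simp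
      · push_neg at hle
        rw [hnorm, if_neg (not_le.mpr hle), norm_neg, Complex.norm_real, Real.norm_eq_abs]
        have h5 : (r n) ^ d ≤ |(k : ℝ)| ^ d := pow_le_pow_left₀ (hrpos n).le hle.le d
        calc (r n) ^ d * |ξ k| ≤ |(k : ℝ)| ^ d * |ξ k| :=
              mul_le_mul_of_nonneg_right h5 (abs_nonneg _)
          _ ≤ C * (|(k : ℝ)| ^ d * |ξ k|) := le_mul_of_one_le_left (by positivity) hC1
  have h2 : -((Cw : ℝ) : ℂ) * specDensD ξ d ω = (((2 * Real.pi)⁻¹ : ℝ) : ℂ) * ∑' k, g k := by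
    rw [specDensD]
    rw [show ∑' k, g k
        = ∑' k : ℤ, (-((Cw : ℝ) : ℂ)) * (((|(k : ℝ)| ^ d * ξ k : ℝ) : ℂ) * e k) from
      tsum_congr fun k => by simp only [hg]; push_cast; ring]
    rw [tsum_mul_left]
    ring
  rw [h2]
  refine Tendsto.congr (fun n => ?_) (key.const_mul _)
  simp only [hf]
  rw [tsum_mul_left]
  ring


end SerialDep
end
end

section
/- (Second-moment identity for independent-copy indicators) Let (U,V) be a random vector in ℝ² whose marginal distribution functions are continuous, and let W and Z be random variables, independent of each other and of (U,V), with W distributed as U and Z distributed as V. Then E[ (1{U<W} − 1/2)·(1{V<Z} − 1/2) ] = (1/12)·ρ, where ρ is Spearman's ρ of the law of (U,V), i.e., ρ = 3( P[(U−U′)(V−V″) > 0] − P[(U−U′)(V−V″) < 0] ) for independent copies (U′,V′), (U″,V″) of (U,V) that are independent of each other and of (U,V). -/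
open MeasureTheory ProbabilityTheory Filter
open scoped Classical Topology BigOperators

noncomputable section

namespace SerialDep

variable {Ω : Type*} [MeasurableSpace Ω]


section Aux

open Set

lemma indic_mul_expand (p q : Prop) :
    (indic p - 1/2) * (indic q - 1/2)
      = indic (p ∧ q) - (1/2) * indic p - (1/2) * indic q + 1/4 := by
  by_cases hp : p <;> by_cases hq : q <;> simp [indic, hp, hq] <;> norm_num

lemma prod_lt_half (σ : Measure ℝ) [IsProbabilityMeasure σ]
    (hσ : ∀ x : ℝ, σ {x} = 0) :
    (σ.prod σ) {p : ℝ × ℝ | p.1 < p.2} = 1/2 := by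
  have hlt : MeasurableSet {p : ℝ × ℝ | p.1 < p.2} :=
    measurableSet_lt measurable_fst measurable_snd
  have hgt : MeasurableSet {p : ℝ × ℝ | p.2 < p.1} :=
    measurableSet_lt measurable_snd measurable_fst
  have heqm : MeasurableSet {p : ℝ × ℝ | p.1 = p.2} :=
    measurableSet_eq_fun measurable_fst measurable_snd
  have hdiag : (σ.prod σ) {p : ℝ × ℝ | p.1 = p.2} = 0 := by
    rw [Measure.prod_apply heqm]
    have h0 : ∀ x : ℝ, σ (Prod.mk x ⁻¹' {p : ℝ × ℝ | p.1 = p.2}) = 0 := by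
      intro x
      have hxs : (Prod.mk x ⁻¹' {p : ℝ × ℝ | p.1 = p.2}) = {x} := by
        ext y; simp [eq_comm]
      rw [hxs]; exact hσ x
    simp [h0, hσ]
  have hswap : (σ.prod σ) {p : ℝ × ℝ | p.2 < p.1} = (σ.prod σ) {p : ℝ × ℝ | p.1 < p.2} := by
    have hps := Measure.prod_swap (μ := σ) (ν := σ)
    conv_lhs => rw [← hps]
    rw [Measure.map_apply measurable_swap hgt]
    congr 1
  have huniv : ({p : ℝ × ℝ | p.1 < p.2} ∪ ({p : ℝ × ℝ | p.2 < p.1} ∪ {p : ℝ × ℝ | p.1 = p.2}))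
      = (Set.univ : Set (ℝ × ℝ)) := by
    ext p
    simp only [Set.mem_union, Set.mem_setOf_eq, Set.mem_univ, iff_true]
    rcases lt_trichotomy p.1 p.2 with h | h | h
    · exact Or.inl h
    · exact Or.inr (Or.inr h)
    · exact Or.inr (Or.inl h)
  have hd1 : Disjoint {p : ℝ × ℝ | p.1 < p.2} ({p : ℝ × ℝ | p.2 < p.1} ∪ {p : ℝ × ℝ | p.1 = p.2}) := by
    rw [Set.disjoint_left]
    rintro p hp (h | h) <;> simp only [Set.mem_setOf_eq] at hp h <;> linarith
  have hd2 : Disjoint {p : ℝ × ℝ | p.2 < p.1} {p : ℝ × ℝ | p.1 = p.2} := by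
    rw [Set.disjoint_left]
    intro p hp hp'
    simp only [Set.mem_setOf_eq] at hp hp'
    linarith
  have hsum : (σ.prod σ) {p : ℝ × ℝ | p.1 < p.2} + (σ.prod σ) {p : ℝ × ℝ | p.2 < p.1} = 1 := by
    have h1 : (σ.prod σ) ({p : ℝ × ℝ | p.1 < p.2} ∪ ({p : ℝ × ℝ | p.2 < p.1} ∪ {p : ℝ × ℝ | p.1 = p.2}))
        = (σ.prod σ) {p : ℝ × ℝ | p.1 < p.2}
          + ((σ.prod σ) {p : ℝ × ℝ | p.2 < p.1} + (σ.prod σ) {p : ℝ × ℝ | p.1 = p.2}) := by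
      rw [measure_union hd1 (hgt.union heqm), measure_union hd2 heqm]
    rw [huniv, measure_univ, hdiag, add_zero] at h1
    exact h1.symm
  rw [hswap] at hsum
  have h2 : 2 * (σ.prod σ) {p : ℝ × ℝ | p.1 < p.2} = 1 := by rw [two_mul]; exact hsum
  exact (ENNReal.eq_div_iff (by norm_num) (by norm_num)).mpr h2

lemma prod_gt_half (σ : Measure ℝ) [IsProbabilityMeasure σ]
    (hσ : ∀ x : ℝ, σ {x} = 0) :
    (σ.prod σ) {p : ℝ × ℝ | p.2 < p.1} = 1/2 := by
  have hgt : MeasurableSet {p : ℝ × ℝ | p.2 < p.1} :=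
    measurableSet_lt measurable_snd measurable_fst
  have hps := Measure.prod_swap (μ := σ) (ν := σ)
  calc (σ.prod σ) {p : ℝ × ℝ | p.2 < p.1}
      = (Measure.map Prod.swap (σ.prod σ)) {p : ℝ × ℝ | p.2 < p.1} := by rw [hps]
    _ = (σ.prod σ) {p : ℝ × ℝ | p.1 < p.2} := by
        rw [Measure.map_apply measurable_swap hgt]
        congr 1
    _ = 1/2 := prod_lt_half σ hσ

lemma prod3_eval (μ : Measure (ℝ × ℝ)) (ν₁ ν₂ : Measure ℝ)
    [IsProbabilityMeasure μ] [IsProbabilityMeasure ν₁] [IsProbabilityMeasure ν₂]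
    (S₁ S₂ : Set (ℝ × ℝ)) (h₁ : MeasurableSet S₁) (h₂ : MeasurableSet S₂) :
    (μ.prod (ν₁.prod ν₂)) {p : (ℝ × ℝ) × ℝ × ℝ | (p.1.1, p.2.1) ∈ S₁ ∧ (p.1.2, p.2.2) ∈ S₂}
      = ∫⁻ x, ν₁ {w | (x.1, w) ∈ S₁} * ν₂ {z | (x.2, z) ∈ S₂} ∂μ := by
  have m1 : Measurable fun p : (ℝ × ℝ) × ℝ × ℝ => (p.1.1, p.2.1) :=
    (measurable_fst.fst).prodMk (measurable_snd.fst)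
  have m2 : Measurable fun p : (ℝ × ℝ) × ℝ × ℝ => (p.1.2, p.2.2) :=
    (measurable_fst.snd).prodMk (measurable_snd.snd)
  have hset : MeasurableSet {p : (ℝ × ℝ) × ℝ × ℝ | (p.1.1, p.2.1) ∈ S₁ ∧ (p.1.2, p.2.2) ∈ S₂} :=
    (m1 h₁).inter (m2 h₂)
  rw [Measure.prod_apply hset]
  refine lintegral_congr fun x => ?_
  have hxs : (Prod.mk x ⁻¹' {p : (ℝ × ℝ) × ℝ × ℝ | (p.1.1, p.2.1) ∈ S₁ ∧ (p.1.2, p.2.2) ∈ S₂})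
      = {w | (x.1, w) ∈ S₁} ×ˢ {z | (x.2, z) ∈ S₂} := by
    ext y; simp [Set.mem_prod]
  rw [hxs, Measure.prod_prod]

end Aux

/-- second-moment identity for independent-copy indicators -/
theorem second_moment_identity_spearman
    (P : Measure Ω) [IsProbabilityMeasure P]
    (U V W Z : Ω → ℝ) (hU : Measurable U) (hV : Measurable V)
    (hW : Measurable W) (hZ : Measurable Z)
    (hU_atomless : ∀ x : ℝ, P {ω | U ω = x} = 0)
    (hV_atomless : ∀ y : ℝ, P {ω | V ω = y} = 0)
    (hWlaw : Measure.map W P = Measure.map U P)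
    (hZlaw : Measure.map Z P = Measure.map V P)
    (hWZindep : ProbabilityTheory.IndepFun W Z P)
    (hWZ_UV_indep : ProbabilityTheory.IndepFun (fun ω => (W ω, Z ω))
      (fun ω => (U ω, V ω)) P) :
    (∫ ω, (indic (U ω < W ω) - 1/2) * (indic (V ω < Z ω) - 1/2) ∂P)
      = (1/12) * (3 * (((Measure.pi fun _ : Fin 3 =>
            Measure.map (fun ω => (U ω, V ω)) P)
            {z : Fin 3 → ℝ × ℝ | ((z 0).1 - (z 1).1) * ((z 0).2 - (z 2).2) > 0}).toReal
        - ((Measure.pi fun _ : Fin 3 =>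
            Measure.map (fun ω => (U ω, V ω)) P)
            {z : Fin 3 → ℝ × ℝ | ((z 0).1 - (z 1).1) * ((z 0).2 - (z 2).2) < 0}).toReal)) := by
  have hUV : Measurable fun ω => (U ω, V ω) := hU.prodMk hV
  have hWZ : Measurable fun ω => (W ω, Z ω) := hW.prodMk hZ
  set μ := Measure.map (fun ω => (U ω, V ω)) P with hμdef
  set ν₁ := Measure.map U P with hν₁def
  set ν₂ := Measure.map V P with hν₂def
  haveI : IsProbabilityMeasure μ := Measure.isProbabilityMeasure_map hUV.aemeasurable
  haveI : IsProbabilityMeasure ν₁ := Measure.isProbabilityMeasure_map hU.aemeasurable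
  haveI : IsProbabilityMeasure ν₂ := Measure.isProbabilityMeasure_map hV.aemeasurable
  have hfst : μ.map Prod.fst = ν₁ := by
    rw [hμdef, Measure.map_map measurable_fst hUV]; rfl
  have hsnd : μ.map Prod.snd = ν₂ := by
    rw [hμdef, Measure.map_map measurable_snd hUV]; rfl
  have hν₁a : ∀ x : ℝ, ν₁ {x} = 0 := fun x => by
    rw [hν₁def, Measure.map_apply hU (measurableSet_singleton x)]; exact hU_atomless x
  have hν₂a : ∀ x : ℝ, ν₂ {x} = 0 := fun x => by
    rw [hν₂def, Measure.map_apply hV (measurableSet_singleton x)]; exact hV_atomless x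
  have hSlt : MeasurableSet {p : ℝ × ℝ | p.1 < p.2} :=
    measurableSet_lt measurable_fst measurable_snd
  have hSgt : MeasurableSet {p : ℝ × ℝ | p.2 < p.1} :=
    measurableSet_lt measurable_snd measurable_fst
  -- measurability of slice functions
  have mg₁ : Measurable fun u : ℝ => ν₁ {w | u < w} := measurable_measure_prodMk_left hSlt
  have mG₁ : Measurable fun u : ℝ => ν₁ {w | w < u} := measurable_measure_prodMk_left hSgt
  have mg₂ : Measurable fun u : ℝ => ν₂ {w | u < w} := measurable_measure_prodMk_left hSlt
  have mG₂ : Measurable fun u : ℝ => ν₂ {w | w < u} := measurable_measure_prodMk_left hSgt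
  -- complement identities
  have hcomp : ∀ (σ : Measure ℝ), IsProbabilityMeasure σ → (∀ x : ℝ, σ {x} = 0) →
      ∀ v : ℝ, σ {z | v < z} + σ {z | z < v} = 1 := by
    intro σ hσp hσa v
    have hd : Disjoint {z : ℝ | v < z} {z : ℝ | z < v} := by
      rw [Set.disjoint_left]
      intro z hz hz'
      simp only [Set.mem_setOf_eq] at hz hz'
      linarith
    have hu : {z : ℝ | v < z} ∪ {z : ℝ | z < v} = ({v} : Set ℝ)ᶜ := by
      ext z
      simp only [Set.mem_union, Set.mem_setOf_eq, Set.mem_compl_iff, Set.mem_singleton_iff]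
      constructor
      · rintro (h | h) rfl <;> exact lt_irrefl _ h
      · exact fun h => (Ne.symm h).lt_or_gt
    calc σ {z | v < z} + σ {z | z < v}
        = σ ({z | v < z} ∪ {z | z < v}) := (measure_union hd measurableSet_Iio).symm
      _ = σ (({v} : Set ℝ)ᶜ) := by rw [hu]
      _ = 1 := by
          rw [measure_compl (measurableSet_singleton v) (measure_ne_top _ _), hσa v,
            measure_univ, tsub_zero]
  have hcomp₁ := hcomp ν₁ inferInstance hν₁a
  have hcomp₂ := hcomp ν₂ inferInstance hν₂a
  -- half-mass identities
  have half₁ : ∫⁻ x : ℝ × ℝ, ν₁ {w | x.1 < w} ∂μ = 1/2 := by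
    have e1 : ∫⁻ u, ν₁ {w | u < w} ∂(μ.map Prod.fst) = ∫⁻ x : ℝ × ℝ, ν₁ {w | x.1 < w} ∂μ :=
      lintegral_map mg₁ measurable_fst
    rw [← e1, hfst]
    have e2 : (ν₁.prod ν₁) {p : ℝ × ℝ | p.1 < p.2} = ∫⁻ u, ν₁ {w | u < w} ∂ν₁ :=
      Measure.prod_apply hSlt
    rw [← e2]
    exact prod_lt_half ν₁ hν₁a
  have halfG₁ : ∫⁻ x : ℝ × ℝ, ν₁ {w | w < x.1} ∂μ = 1/2 := by
    have e1 : ∫⁻ u, ν₁ {w | w < u} ∂(μ.map Prod.fst) = ∫⁻ x : ℝ × ℝ, ν₁ {w | w < x.1} ∂μ :=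
      lintegral_map mG₁ measurable_fst
    rw [← e1, hfst]
    have e2 : (ν₁.prod ν₁) {p : ℝ × ℝ | p.2 < p.1} = ∫⁻ u, ν₁ {w | w < u} ∂ν₁ :=
      Measure.prod_apply hSgt
    rw [← e2]
    exact prod_gt_half ν₁ hν₁a
  have half₂ : ∫⁻ x : ℝ × ℝ, ν₂ {z | x.2 < z} ∂μ = 1/2 := by
    have e1 : ∫⁻ u, ν₂ {w | u < w} ∂(μ.map Prod.snd) = ∫⁻ x : ℝ × ℝ, ν₂ {z | x.2 < z} ∂μ :=
      lintegral_map mg₂ measurable_snd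
    rw [← e1, hsnd]
    have e2 : (ν₂.prod ν₂) {p : ℝ × ℝ | p.1 < p.2} = ∫⁻ u, ν₂ {w | u < w} ∂ν₂ :=
      Measure.prod_apply hSlt
    rw [← e2]
    exact prod_lt_half ν₂ hν₂a
  -- the four quadrant quantities
  have ha : (μ.prod (ν₁.prod ν₂)) {p : (ℝ × ℝ) × ℝ × ℝ | p.1.1 < p.2.1 ∧ p.1.2 < p.2.2}
      = ∫⁻ x : ℝ × ℝ, ν₁ {w | x.1 < w} * ν₂ {z | x.2 < z} ∂μ :=
    prod3_eval μ ν₁ ν₂ {p : ℝ × ℝ | p.1 < p.2} {p : ℝ × ℝ | p.1 < p.2} hSlt hSlt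
  have hb : (μ.prod (ν₁.prod ν₂)) {p : (ℝ × ℝ) × ℝ × ℝ | p.1.1 < p.2.1 ∧ p.2.2 < p.1.2}
      = ∫⁻ x : ℝ × ℝ, ν₁ {w | x.1 < w} * ν₂ {z | z < x.2} ∂μ :=
    prod3_eval μ ν₁ ν₂ {p : ℝ × ℝ | p.1 < p.2} {p : ℝ × ℝ | p.2 < p.1} hSlt hSgt
  have hc : (μ.prod (ν₁.prod ν₂)) {p : (ℝ × ℝ) × ℝ × ℝ | p.2.1 < p.1.1 ∧ p.1.2 < p.2.2}
      = ∫⁻ x : ℝ × ℝ, ν₁ {w | w < x.1} * ν₂ {z | x.2 < z} ∂μ :=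
    prod3_eval μ ν₁ ν₂ {p : ℝ × ℝ | p.2 < p.1} {p : ℝ × ℝ | p.1 < p.2} hSgt hSlt
  have hd : (μ.prod (ν₁.prod ν₂)) {p : (ℝ × ℝ) × ℝ × ℝ | p.2.1 < p.1.1 ∧ p.2.2 < p.1.2}
      = ∫⁻ x : ℝ × ℝ, ν₁ {w | w < x.1} * ν₂ {z | z < x.2} ∂μ :=
    prod3_eval μ ν₁ ν₂ {p : ℝ × ℝ | p.2 < p.1} {p : ℝ × ℝ | p.2 < p.1} hSgt hSgt
  -- sum identities among the four quantities
  have hab : (∫⁻ x : ℝ × ℝ, ν₁ {w | x.1 < w} * ν₂ {z | x.2 < z} ∂μ)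
      + (∫⁻ x : ℝ × ℝ, ν₁ {w | x.1 < w} * ν₂ {z | z < x.2} ∂μ) = 1/2 := by
    have mm : Measurable fun x : ℝ × ℝ => ν₁ {w | x.1 < w} * ν₂ {z | x.2 < z} :=
      (mg₁.comp measurable_fst).mul (mg₂.comp measurable_snd)
    rw [← lintegral_add_left mm]
    calc ∫⁻ x : ℝ × ℝ, (ν₁ {w | x.1 < w} * ν₂ {z | x.2 < z}
            + ν₁ {w | x.1 < w} * ν₂ {z | z < x.2}) ∂μ
        = ∫⁻ x : ℝ × ℝ, ν₁ {w | x.1 < w} ∂μ :=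
          lintegral_congr fun x => by rw [← mul_add, hcomp₂ x.2, mul_one]
      _ = 1/2 := half₁
  have hcd : (∫⁻ x : ℝ × ℝ, ν₁ {w | w < x.1} * ν₂ {z | x.2 < z} ∂μ)
      + (∫⁻ x : ℝ × ℝ, ν₁ {w | w < x.1} * ν₂ {z | z < x.2} ∂μ) = 1/2 := by
    have mm : Measurable fun x : ℝ × ℝ => ν₁ {w | w < x.1} * ν₂ {z | x.2 < z} :=
      (mG₁.comp measurable_fst).mul (mg₂.comp measurable_snd)
    rw [← lintegral_add_left mm]
    calc ∫⁻ x : ℝ × ℝ, (ν₁ {w | w < x.1} * ν₂ {z | x.2 < z}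
            + ν₁ {w | w < x.1} * ν₂ {z | z < x.2}) ∂μ
        = ∫⁻ x : ℝ × ℝ, ν₁ {w | w < x.1} ∂μ :=
          lintegral_congr fun x => by rw [← mul_add, hcomp₂ x.2, mul_one]
      _ = 1/2 := halfG₁
  have hac : (∫⁻ x : ℝ × ℝ, ν₁ {w | x.1 < w} * ν₂ {z | x.2 < z} ∂μ)
      + (∫⁻ x : ℝ × ℝ, ν₁ {w | w < x.1} * ν₂ {z | x.2 < z} ∂μ) = 1/2 := by
    have mm : Measurable fun x : ℝ × ℝ => ν₁ {w | x.1 < w} * ν₂ {z | x.2 < z} :=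
      (mg₁.comp measurable_fst).mul (mg₂.comp measurable_snd)
    rw [← lintegral_add_left mm]
    calc ∫⁻ x : ℝ × ℝ, (ν₁ {w | x.1 < w} * ν₂ {z | x.2 < z}
            + ν₁ {w | w < x.1} * ν₂ {z | x.2 < z}) ∂μ
        = ∫⁻ x : ℝ × ℝ, ν₂ {z | x.2 < z} ∂μ :=
          lintegral_congr fun x => by rw [← add_mul, hcomp₁ x.1, one_mul]
      _ = 1/2 := half₂
  -- measurability of the quadrant sets
  have hmSA : MeasurableSet {p : (ℝ × ℝ) × ℝ × ℝ | p.1.1 < p.2.1 ∧ p.1.2 < p.2.2} :=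
    (measurableSet_lt measurable_fst.fst measurable_snd.fst).inter
      (measurableSet_lt measurable_fst.snd measurable_snd.snd)
  have hmSB : MeasurableSet {p : (ℝ × ℝ) × ℝ × ℝ | p.1.1 < p.2.1 ∧ p.2.2 < p.1.2} :=
    (measurableSet_lt measurable_fst.fst measurable_snd.fst).inter
      (measurableSet_lt measurable_snd.snd measurable_fst.snd)
  have hmSC : MeasurableSet {p : (ℝ × ℝ) × ℝ × ℝ | p.2.1 < p.1.1 ∧ p.1.2 < p.2.2} :=
    (measurableSet_lt measurable_snd.fst measurable_fst.fst).inter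
      (measurableSet_lt measurable_fst.snd measurable_snd.snd)
  have hmSD : MeasurableSet {p : (ℝ × ℝ) × ℝ × ℝ | p.2.1 < p.1.1 ∧ p.2.2 < p.1.2} :=
    (measurableSet_lt measurable_snd.fst measurable_fst.fst).inter
      (measurableSet_lt measurable_snd.snd measurable_fst.snd)
  -- the measure-preserving map from the 3-fold product
  have mpT : MeasurePreserving (fun z : Fin 3 → ℝ × ℝ => (z 0, ((z 1).1, (z 2).2)))
      (Measure.pi fun _ : Fin 3 => μ) (μ.prod (ν₁.prod ν₂)) := by
    have h1 := measurePreserving_piFinSuccAbove (fun _ : Fin 3 => μ) 0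
    have h2 := measurePreserving_piFinSuccAbove (fun _ : Fin 2 => μ) 0
    have h3 := measurePreserving_piUnique (fun _ : Fin 1 => μ)
    have hfstMP : MeasurePreserving (Prod.fst : ℝ × ℝ → ℝ) μ ν₁ := ⟨measurable_fst, hfst⟩
    have hsndMP : MeasurePreserving (Prod.snd : ℝ × ℝ → ℝ) μ ν₂ := ⟨measurable_snd, hsnd⟩
    have hinner := (hfstMP.prod (hsndMP.comp h3)).comp h2
    exact ((MeasurePreserving.id μ).prod hinner).comp h1
  -- transporting the quadrant measures to the 3-fold product
  have hπa : (Measure.pi fun _ : Fin 3 => μ)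
        {z : Fin 3 → ℝ × ℝ | (z 0).1 < (z 1).1 ∧ (z 0).2 < (z 2).2}
      = (μ.prod (ν₁.prod ν₂)) {p : (ℝ × ℝ) × ℝ × ℝ | p.1.1 < p.2.1 ∧ p.1.2 < p.2.2} :=
    mpT.measure_preimage hmSA.nullMeasurableSet
  have hπb : (Measure.pi fun _ : Fin 3 => μ)
        {z : Fin 3 → ℝ × ℝ | (z 0).1 < (z 1).1 ∧ (z 2).2 < (z 0).2}
      = (μ.prod (ν₁.prod ν₂)) {p : (ℝ × ℝ) × ℝ × ℝ | p.1.1 < p.2.1 ∧ p.2.2 < p.1.2} :=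
    mpT.measure_preimage hmSB.nullMeasurableSet
  have hπc : (Measure.pi fun _ : Fin 3 => μ)
        {z : Fin 3 → ℝ × ℝ | (z 1).1 < (z 0).1 ∧ (z 0).2 < (z 2).2}
      = (μ.prod (ν₁.prod ν₂)) {p : (ℝ × ℝ) × ℝ × ℝ | p.2.1 < p.1.1 ∧ p.1.2 < p.2.2} :=
    mpT.measure_preimage hmSC.nullMeasurableSet
  have hπd : (Measure.pi fun _ : Fin 3 => μ)
        {z : Fin 3 → ℝ × ℝ | (z 1).1 < (z 0).1 ∧ (z 2).2 < (z 0).2}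
      = (μ.prod (ν₁.prod ν₂)) {p : (ℝ × ℝ) × ℝ × ℝ | p.2.1 < p.1.1 ∧ p.2.2 < p.1.2} :=
    mpT.measure_preimage hmSD.nullMeasurableSet
  -- splitting the positive and negative product sets
  have hposset : {z : Fin 3 → ℝ × ℝ | ((z 0).1 - (z 1).1) * ((z 0).2 - (z 2).2) > 0}
      = {z : Fin 3 → ℝ × ℝ | (z 0).1 < (z 1).1 ∧ (z 0).2 < (z 2).2}
        ∪ {z : Fin 3 → ℝ × ℝ | (z 1).1 < (z 0).1 ∧ (z 2).2 < (z 0).2} := by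
    ext z
    simp only [Set.mem_setOf_eq, Set.mem_union, gt_iff_lt, mul_pos_iff, sub_pos, sub_neg]
    tauto
  have hnegset : {z : Fin 3 → ℝ × ℝ | ((z 0).1 - (z 1).1) * ((z 0).2 - (z 2).2) < 0}
      = {z : Fin 3 → ℝ × ℝ | (z 0).1 < (z 1).1 ∧ (z 2).2 < (z 0).2}
        ∪ {z : Fin 3 → ℝ × ℝ | (z 1).1 < (z 0).1 ∧ (z 0).2 < (z 2).2} := by
    ext z
    simp only [Set.mem_setOf_eq, Set.mem_union, mul_neg_iff, sub_pos, sub_neg]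
    tauto
  have hc01 : Measurable fun z : Fin 3 → ℝ × ℝ => (z 0).1 := (measurable_pi_apply 0).fst
  have hc11 : Measurable fun z : Fin 3 → ℝ × ℝ => (z 1).1 := (measurable_pi_apply 1).fst
  have hc02 : Measurable fun z : Fin 3 → ℝ × ℝ => (z 0).2 := (measurable_pi_apply 0).snd
  have hc22 : Measurable fun z : Fin 3 → ℝ × ℝ => (z 2).2 := (measurable_pi_apply 2).snd
  have hm3a : MeasurableSet {z : Fin 3 → ℝ × ℝ | (z 0).1 < (z 1).1 ∧ (z 0).2 < (z 2).2} :=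
    (measurableSet_lt hc01 hc11).inter (measurableSet_lt hc02 hc22)
  have hm3b : MeasurableSet {z : Fin 3 → ℝ × ℝ | (z 0).1 < (z 1).1 ∧ (z 2).2 < (z 0).2} :=
    (measurableSet_lt hc01 hc11).inter (measurableSet_lt hc22 hc02)
  have hm3c : MeasurableSet {z : Fin 3 → ℝ × ℝ | (z 1).1 < (z 0).1 ∧ (z 0).2 < (z 2).2} :=
    (measurableSet_lt hc11 hc01).inter (measurableSet_lt hc02 hc22)
  have hm3d : MeasurableSet {z : Fin 3 → ℝ × ℝ | (z 1).1 < (z 0).1 ∧ (z 2).2 < (z 0).2} :=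
    (measurableSet_lt hc11 hc01).inter (measurableSet_lt hc22 hc02)
  have hdisj_pos : Disjoint {z : Fin 3 → ℝ × ℝ | (z 0).1 < (z 1).1 ∧ (z 0).2 < (z 2).2}
      {z : Fin 3 → ℝ × ℝ | (z 1).1 < (z 0).1 ∧ (z 2).2 < (z 0).2} := by
    rw [Set.disjoint_left]
    intro z hz hz'
    simp only [Set.mem_setOf_eq] at hz hz'
    linarith [hz.1, hz'.1]
  have hdisj_neg : Disjoint {z : Fin 3 → ℝ × ℝ | (z 0).1 < (z 1).1 ∧ (z 2).2 < (z 0).2}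
      {z : Fin 3 → ℝ × ℝ | (z 1).1 < (z 0).1 ∧ (z 0).2 < (z 2).2} := by
    rw [Set.disjoint_left]
    intro z hz hz'
    simp only [Set.mem_setOf_eq] at hz hz'
    linarith [hz.1, hz'.1]
  have hπpos : (Measure.pi fun _ : Fin 3 => μ)
        {z : Fin 3 → ℝ × ℝ | ((z 0).1 - (z 1).1) * ((z 0).2 - (z 2).2) > 0}
      = (∫⁻ x : ℝ × ℝ, ν₁ {w | x.1 < w} * ν₂ {z | x.2 < z} ∂μ)
        + (∫⁻ x : ℝ × ℝ, ν₁ {w | w < x.1} * ν₂ {z | z < x.2} ∂μ) := by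
    rw [hposset, measure_union hdisj_pos hm3d, hπa, hπd, ha, hd]
  have hπneg : (Measure.pi fun _ : Fin 3 => μ)
        {z : Fin 3 → ℝ × ℝ | ((z 0).1 - (z 1).1) * ((z 0).2 - (z 2).2) < 0}
      = (∫⁻ x : ℝ × ℝ, ν₁ {w | x.1 < w} * ν₂ {z | z < x.2} ∂μ)
        + (∫⁻ x : ℝ × ℝ, ν₁ {w | w < x.1} * ν₂ {z | x.2 < z} ∂μ) := by
    rw [hnegset, measure_union hdisj_neg hm3c, hπb, hπc, hb, hc]
  -- identification of the law of ((U,V),(W,Z))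
  have hWZlaw : Measure.map (fun ω => (W ω, Z ω)) P = ν₁.prod ν₂ := by
    rw [(ProbabilityTheory.indepFun_iff_map_prod_eq_prod_map_map hW.aemeasurable
      hZ.aemeasurable).mp hWZindep, hWlaw, hZlaw]
  have hmap : Measure.map (fun ω => ((U ω, V ω), (W ω, Z ω))) P = μ.prod (ν₁.prod ν₂) := by
    rw [(ProbabilityTheory.indepFun_iff_map_prod_eq_prod_map_map hUV.aemeasurable
      hWZ.aemeasurable).mp hWZ_UV_indep.symm, hWZlaw]
  have hpair : Measurable fun ω => ((U ω, V ω), (W ω, Z ω)) := hUV.prodMk hWZ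
  -- identification of the probabilities appearing on the left-hand side
  have hPsAB : P {ω | U ω < W ω ∧ V ω < Z ω}
      = (μ.prod (ν₁.prod ν₂)) {p : (ℝ × ℝ) × ℝ × ℝ | p.1.1 < p.2.1 ∧ p.1.2 < p.2.2} := by
    calc P {ω | U ω < W ω ∧ V ω < Z ω}
        = Measure.map (fun ω => ((U ω, V ω), (W ω, Z ω))) P
            {p : (ℝ × ℝ) × ℝ × ℝ | p.1.1 < p.2.1 ∧ p.1.2 < p.2.2} :=
          (Measure.map_apply hpair hmSA).symm
      _ = _ := by rw [hmap]
  have hmSA1 : MeasurableSet {p : (ℝ × ℝ) × ℝ × ℝ | p.1.1 < p.2.1} :=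
    measurableSet_lt measurable_fst.fst measurable_snd.fst
  have hmSB1 : MeasurableSet {p : (ℝ × ℝ) × ℝ × ℝ | p.1.2 < p.2.2} :=
    measurableSet_lt measurable_fst.snd measurable_snd.snd
  have hPA : (μ.prod (ν₁.prod ν₂)) {p : (ℝ × ℝ) × ℝ × ℝ | p.1.1 < p.2.1} = 1/2 := by
    calc (μ.prod (ν₁.prod ν₂)) {p : (ℝ × ℝ) × ℝ × ℝ | p.1.1 < p.2.1}
        = ∫⁻ x, (ν₁.prod ν₂) (Prod.mk x ⁻¹' {p : (ℝ × ℝ) × ℝ × ℝ | p.1.1 < p.2.1}) ∂μ :=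
          Measure.prod_apply hmSA1
      _ = ∫⁻ x : ℝ × ℝ, ν₁ {w | x.1 < w} ∂μ := by
          refine lintegral_congr fun x => ?_
          have hx : (Prod.mk x ⁻¹' {p : (ℝ × ℝ) × ℝ × ℝ | p.1.1 < p.2.1})
              = {w | x.1 < w} ×ˢ (Set.univ : Set ℝ) := by
            ext y; simp [Set.mem_prod]
          rw [hx, Measure.prod_prod, measure_univ, mul_one]
      _ = 1/2 := half₁
  have hPB : (μ.prod (ν₁.prod ν₂)) {p : (ℝ × ℝ) × ℝ × ℝ | p.1.2 < p.2.2} = 1/2 := by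
    calc (μ.prod (ν₁.prod ν₂)) {p : (ℝ × ℝ) × ℝ × ℝ | p.1.2 < p.2.2}
        = ∫⁻ x, (ν₁.prod ν₂) (Prod.mk x ⁻¹' {p : (ℝ × ℝ) × ℝ × ℝ | p.1.2 < p.2.2}) ∂μ :=
          Measure.prod_apply hmSB1
      _ = ∫⁻ x : ℝ × ℝ, ν₂ {z | x.2 < z} ∂μ := by
          refine lintegral_congr fun x => ?_
          have hx : (Prod.mk x ⁻¹' {p : (ℝ × ℝ) × ℝ × ℝ | p.1.2 < p.2.2})
              = (Set.univ : Set ℝ) ×ˢ {z | x.2 < z} := by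
            ext y; simp [Set.mem_prod]
          rw [hx, Measure.prod_prod, measure_univ, one_mul]
      _ = 1/2 := half₂
  have hPsA : P {ω | U ω < W ω} = 1/2 := by
    calc P {ω | U ω < W ω}
        = Measure.map (fun ω => ((U ω, V ω), (W ω, Z ω))) P
            {p : (ℝ × ℝ) × ℝ × ℝ | p.1.1 < p.2.1} := (Measure.map_apply hpair hmSA1).symm
      _ = 1/2 := by rw [hmap]; exact hPA
  have hPsB : P {ω | V ω < Z ω} = 1/2 := by
    calc P {ω | V ω < Z ω}
        = Measure.map (fun ω => ((U ω, V ω), (W ω, Z ω))) P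
            {p : (ℝ × ℝ) × ℝ × ℝ | p.1.2 < p.2.2} := (Measure.map_apply hpair hmSB1).symm
      _ = 1/2 := by rw [hmap]; exact hPB
  -- computing the left-hand side
  have hindicInt : ∀ s : Set Ω, MeasurableSet s →
      (∫ ω, indic (ω ∈ s) ∂P) = (P s).toReal ∧ Integrable (fun ω => indic (ω ∈ s)) P := by
    intro s hs
    have hfun : (fun ω => indic (ω ∈ s)) = s.indicator (fun _ => (1 : ℝ)) := by
      funext ω; by_cases h : ω ∈ s <;> simp [indic, h]
    constructor
    · rw [hfun, integral_indicator_const (1 : ℝ) hs, smul_eq_mul, mul_one, measureReal_def]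
    · rw [hfun]; exact (integrable_const (1 : ℝ)).indicator hs
  have hsA : MeasurableSet {ω | U ω < W ω} := measurableSet_lt hU hW
  have hsB : MeasurableSet {ω | V ω < Z ω} := measurableSet_lt hV hZ
  have hsAB : MeasurableSet {ω | U ω < W ω ∧ V ω < Z ω} := by
    exact (measurableSet_lt hU hW).inter (measurableSet_lt hV hZ)
  obtain ⟨hIAB, hIABint⟩ := hindicInt _ hsAB
  obtain ⟨hIA, hIAint⟩ := hindicInt _ hsA
  obtain ⟨hIB, hIBint⟩ := hindicInt _ hsB
  have hLHS : (∫ ω, (indic (U ω < W ω) - 1/2) * (indic (V ω < Z ω) - 1/2) ∂P)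
      = (P {ω | U ω < W ω ∧ V ω < Z ω}).toReal
        - (1/2) * (P {ω | U ω < W ω}).toReal - (1/2) * (P {ω | V ω < Z ω}).toReal + 1/4 := by
    have hrw : (fun ω => (indic (U ω < W ω) - 1/2) * (indic (V ω < Z ω) - 1/2))
        = fun ω => indic (ω ∈ {ω | U ω < W ω ∧ V ω < Z ω})
            - (1/2) * indic (ω ∈ {ω | U ω < W ω}) - (1/2) * indic (ω ∈ {ω | V ω < Z ω})
            + 1/4 := by
      funext ω
      exact indic_mul_expand (U ω < W ω) (V ω < Z ω)
    rw [hrw]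
    have I2 : Integrable (fun ω => indic (ω ∈ {ω | U ω < W ω ∧ V ω < Z ω})
        - (1/2) * indic (ω ∈ {ω | U ω < W ω})) P :=
      hIABint.sub (hIAint.const_mul (1/2))
    have I1 : Integrable (fun ω => indic (ω ∈ {ω | U ω < W ω ∧ V ω < Z ω})
        - (1/2) * indic (ω ∈ {ω | U ω < W ω}) - (1/2) * indic (ω ∈ {ω | V ω < Z ω})) P :=
      I2.sub (hIBint.const_mul (1/2))
    rw [integral_add I1 (integrable_const (1/4 : ℝ))]
    rw [integral_sub I2 (hIBint.const_mul (1/2))]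
    rw [integral_sub hIABint (hIAint.const_mul (1/2))]
    rw [integral_const_mul, integral_const_mul, hIAB, hIA, hIB, integral_const]
    simp
  -- finiteness of the lintegral quantities
  have hfa : (∫⁻ x : ℝ × ℝ, ν₁ {w | x.1 < w} * ν₂ {z | x.2 < z} ∂μ) ≠ ⊤ := by
    rw [← ha]; exact measure_ne_top _ _
  have hfb : (∫⁻ x : ℝ × ℝ, ν₁ {w | x.1 < w} * ν₂ {z | z < x.2} ∂μ) ≠ ⊤ := by
    rw [← hb]; exact measure_ne_top _ _
  have hfc : (∫⁻ x : ℝ × ℝ, ν₁ {w | w < x.1} * ν₂ {z | x.2 < z} ∂μ) ≠ ⊤ := by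
    rw [← hc]; exact measure_ne_top _ _
  have hfd : (∫⁻ x : ℝ × ℝ, ν₁ {w | w < x.1} * ν₂ {z | z < x.2} ∂μ) ≠ ⊤ := by
    rw [← hd]; exact measure_ne_top _ _
  have htoReal_half : ((1 : ENNReal)/2).toReal = 1/2 := by
    rw [ENNReal.toReal_div]; simp
  have hABr : (∫⁻ x : ℝ × ℝ, ν₁ {w | x.1 < w} * ν₂ {z | x.2 < z} ∂μ).toReal
      + (∫⁻ x : ℝ × ℝ, ν₁ {w | x.1 < w} * ν₂ {z | z < x.2} ∂μ).toReal = 1/2 := by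
    rw [← ENNReal.toReal_add hfa hfb, hab]; exact htoReal_half
  have hCDr : (∫⁻ x : ℝ × ℝ, ν₁ {w | w < x.1} * ν₂ {z | x.2 < z} ∂μ).toReal
      + (∫⁻ x : ℝ × ℝ, ν₁ {w | w < x.1} * ν₂ {z | z < x.2} ∂μ).toReal = 1/2 := by
    rw [← ENNReal.toReal_add hfc hfd, hcd]; exact htoReal_half
  have hACr : (∫⁻ x : ℝ × ℝ, ν₁ {w | x.1 < w} * ν₂ {z | x.2 < z} ∂μ).toReal
      + (∫⁻ x : ℝ × ℝ, ν₁ {w | w < x.1} * ν₂ {z | x.2 < z} ∂μ).toReal = 1/2 := by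
    rw [← ENNReal.toReal_add hfa hfc, hac]; exact htoReal_half
  have hposR : ((Measure.pi fun _ : Fin 3 => μ)
        {z : Fin 3 → ℝ × ℝ | ((z 0).1 - (z 1).1) * ((z 0).2 - (z 2).2) > 0}).toReal
      = (∫⁻ x : ℝ × ℝ, ν₁ {w | x.1 < w} * ν₂ {z | x.2 < z} ∂μ).toReal
        + (∫⁻ x : ℝ × ℝ, ν₁ {w | w < x.1} * ν₂ {z | z < x.2} ∂μ).toReal := by
    rw [hπpos]; exact ENNReal.toReal_add hfa hfd
  have hnegR : ((Measure.pi fun _ : Fin 3 => μ)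
        {z : Fin 3 → ℝ × ℝ | ((z 0).1 - (z 1).1) * ((z 0).2 - (z 2).2) < 0}).toReal
      = (∫⁻ x : ℝ × ℝ, ν₁ {w | x.1 < w} * ν₂ {z | z < x.2} ∂μ).toReal
        + (∫⁻ x : ℝ × ℝ, ν₁ {w | w < x.1} * ν₂ {z | x.2 < z} ∂μ).toReal := by
    rw [hπneg]; exact ENNReal.toReal_add hfb hfc
  have hPsABr : (P {ω | U ω < W ω ∧ V ω < Z ω}).toReal
      = (∫⁻ x : ℝ × ℝ, ν₁ {w | x.1 < w} * ν₂ {z | x.2 < z} ∂μ).toReal := by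
    rw [hPsAB, ha]
  rw [hLHS, hPsABr, hPsA, hPsB, hposR, hnegR, htoReal_half]
  linarith


end SerialDep
end
end
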